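/- arXiv:1808.04209 — 5 statements merged into one kernel-verified Lean document; each statement's English description precedes it below -/
import Mathlib

section
/- Let ρ_S be a density matrix on Fin s, ρ_R a density matrix on Fin r, and E_S : Fin s → ℤ, E_R : Fin r → ℤ energy functions. Then the mutual asymmetry equals the entropy gap between local and global dephasing of the product state: A(ρ_S) + A(ρ_R) − A(ρ_S ⊗ ρ_R) = S(Δ(ρ_S ⊗ ρ_R)) − S(Π(ρ_S ⊗ ρ_R)). -/
open Matrix Kronecker BigOperators ComplexOrder

/-- η(x) = −x·log x -/
noncomputable def entEta (x : ℝ) : ℝ := -x * Real.log x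

/-- von Neumann entropy S(ρ) = ∑ η(λ_i(ρ)) using the eigenvalues from the
spectral theorem for Hermitian matrices. -/
noncomputable def vnEntropy {n : Type*} [Fintype n] [DecidableEq n] (ρ : Matrix n n ℂ) : ℝ :=
  if h : ρ.IsHermitian then ∑ i, entEta (h.eigenvalues i) else 0

/-- A density matrix: Hermitian, positive semidefinite, trace one. -/
def IsDensityMatrix {n : Type*} [Fintype n] [DecidableEq n] (ρ : Matrix n n ℂ) : Prop :=
  ρ.IsHermitian ∧ ρ.PosSemidef ∧ ρ.trace = 1

/-- Pinching of a matrix by a function `f` on the index set. -/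
def pinch {I : Type*} {α : Type*} [DecidableEq α] (f : I → α) (M : Matrix I I ℂ) :
    Matrix I I ℂ :=
  Matrix.of fun i j => if f i = f j then M i j else 0

/-- Relative entropy of asymmetry A(ρ) = S(P_f ρ) − S(ρ). -/
noncomputable def asym {I : Type*} [Fintype I] [DecidableEq I] {α : Type*} [DecidableEq α]
    (f : I → α) (ρ : Matrix I I ℂ) : ℝ :=
  vnEntropy (pinch f ρ) - vnEntropy ρ

/-- Energy function of the global dephasing Π. -/
def globalE {s r : ℕ} (ES : Fin s → ℤ) (ER : Fin r → ℤ) : Fin s × Fin r → ℤ :=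
  fun p => ES p.1 + ER p.2

/-- Energy function of the local dephasing Δ. -/
def localE {s r : ℕ} (ES : Fin s → ℤ) (ER : Fin r → ℤ) : Fin s × Fin r → ℤ × ℤ :=
  fun p => (ES p.1, ER p.2)

section Aux

open Polynomial

lemma aux_charpoly_diagonal {n : Type*} [Fintype n] [DecidableEq n] (d : n → ℂ) :
    (Matrix.diagonal d).charpoly = ∏ i, (X - C (d i)) := by
  rw [Matrix.charpoly]
  have h : (Matrix.diagonal d).charmatrix = Matrix.diagonal (fun i => (X : ℂ[X]) - C (d i)) := by
    ext i j
    by_cases h : i = j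
    · subst h; rw [Matrix.charmatrix_apply_eq]; simp
    · rw [Matrix.charmatrix_apply_ne _ _ _ h]
      simp [Matrix.diagonal_apply_ne _ h, Matrix.diagonal_apply_ne]
  rw [h, Matrix.det_diagonal]

lemma aux_charpoly_conj {n : Type*} [Fintype n] [DecidableEq n] (U D : Matrix n n ℂ)
    (h1 : U * star U = 1) :
    (U * D * star U).charpoly = D.charpoly := by
  have hcm : (U * D * star U).charmatrix
      = U.map C * D.charmatrix * (star U).map C := by
    rw [Matrix.charmatrix]
    rw [Matrix.charmatrix]
    simp only [RingHom.mapMatrix_apply]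
    have hmap : ∀ (M N : Matrix n n ℂ), (M * N).map (C : ℂ → ℂ[X]) = M.map C * N.map C :=
      fun M N => Matrix.map_mul
    rw [mul_sub, sub_mul]
    congr 1
    · have hc : Commute (Matrix.scalar n (X : ℂ[X])) (U.map C) :=
        Matrix.scalar_commute _ (fun r' => Commute.all _ _) _
      rw [← hc.eq, mul_assoc, ← hmap, h1]
      simp
    · rw [← hmap, ← hmap]
  rw [Matrix.charpoly, Matrix.charpoly, hcm, Matrix.det_mul, Matrix.det_mul]
  have hdet : (U.map (C : ℂ → ℂ[X])).det * ((star U).map C).det = 1 := by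
    rw [← Matrix.det_mul, ← Matrix.map_mul, h1]
    simp
  calc (U.map (C : ℂ → ℂ[X])).det * D.charmatrix.det * ((star U).map C).det
      = D.charmatrix.det * ((U.map (C : ℂ → ℂ[X])).det * ((star U).map C).det) := by ring
    _ = D.charmatrix.det := by rw [hdet, mul_one]

lemma aux_roots_of_diag_charpoly {n : Type*} [Fintype n] [DecidableEq n] (d : n → ℂ) :
    (Matrix.diagonal d).charpoly.roots = Finset.univ.val.map d := by
  rw [aux_charpoly_diagonal]
  have h : (∏ i, (X - C (d i))) = ((Finset.univ.val.map d).map fun a => X - C a).prod := by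
    rw [Multiset.map_map]; rfl
  rw [h, Polynomial.roots_multiset_prod_X_sub_C]

lemma aux_roots_charpoly_hermitian {n : Type*} [Fintype n] [DecidableEq n] {A : Matrix n n ℂ}
    (hA : A.IsHermitian) :
    A.charpoly.roots = Finset.univ.val.map (fun i => ((hA.eigenvalues i : ℝ) : ℂ)) := by
  have h1 : (hA.eigenvectorUnitary : Matrix n n ℂ)
      * star (hA.eigenvectorUnitary : Matrix n n ℂ) = 1 :=
    Matrix.mem_unitaryGroup_iff.mp (hA.eigenvectorUnitary).2
  have hc : A.charpoly = (Matrix.diagonal ((↑) ∘ hA.eigenvalues : n → ℂ)).charpoly := by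
    conv_lhs => rw [hA.spectral_theorem]
    exact aux_charpoly_conj _ _ h1
  rw [hc, aux_roots_of_diag_charpoly]
  rfl

lemma aux_trace_eq_sum_eigen {n : Type*} [Fintype n] [DecidableEq n] {A : Matrix n n ℂ}
    (hA : A.IsHermitian) : A.trace = ∑ i, ((hA.eigenvalues i : ℝ) : ℂ) := by
  have h2 : star (hA.eigenvectorUnitary : Matrix n n ℂ)
      * (hA.eigenvectorUnitary : Matrix n n ℂ) = 1 :=
    Matrix.mem_unitaryGroup_iff'.mp (hA.eigenvectorUnitary).2
  conv_lhs => rw [hA.spectral_theorem]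
  rw [Unitary.conjStarAlgAut_apply, Matrix.trace_mul_comm, ← mul_assoc, h2, one_mul, Matrix.trace_diagonal]
  rfl

lemma aux_sum_g_eigen_eq {n : Type*} [Fintype n] [DecidableEq n] {A : Matrix n n ℂ}
    (hA : A.IsHermitian) (d : n → ℝ)
    (h : A.charpoly.roots = Finset.univ.val.map (fun i => ((d i : ℝ) : ℂ)))
    (g : ℝ → ℝ) : ∑ i, g (hA.eigenvalues i) = ∑ i, g (d i) := by
  have h2 := aux_roots_charpoly_hermitian hA
  have h3 : Finset.univ.val.map hA.eigenvalues = Finset.univ.val.map d := by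
    apply Multiset.map_injective (Complex.ofReal_injective)
    rw [Multiset.map_map, Multiset.map_map]
    have heq : Multiset.map (Complex.ofReal ∘ hA.eigenvalues) Finset.univ.val
        = Multiset.map (fun i => ((hA.eigenvalues i : ℝ) : ℂ)) Finset.univ.val := rfl
    rw [heq, ← h2, h]
    rfl
  calc ∑ i, g (hA.eigenvalues i)
      = ((Finset.univ.val.map hA.eigenvalues).map g).sum := by
        rw [Multiset.map_map]; rfl
    _ = ((Finset.univ.val.map d).map g).sum := by rw [h3]
    _ = ∑ i, g (d i) := by rw [Multiset.map_map]; rfl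

lemma aux_kron_star {m n : Type*} (A : Matrix m m ℂ) (B : Matrix n n ℂ) :
    star (A ⊗ₖ B) = star A ⊗ₖ star B := by
  ext ⟨i, j⟩ ⟨k, l⟩
  simp [Matrix.conjTranspose_apply, Matrix.kroneckerMap_apply, star_mul']

lemma aux_kron_isHermitian {m n : Type*} {A : Matrix m m ℂ} {B : Matrix n n ℂ}
    (hA : A.IsHermitian) (hB : B.IsHermitian) : (A ⊗ₖ B).IsHermitian := by
  rw [Matrix.IsHermitian, show (A ⊗ₖ B)ᴴ = star (A ⊗ₖ B) from rfl, aux_kron_star]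
  rw [show (star A : Matrix m m ℂ) = Aᴴ from rfl, show (star B : Matrix n n ℂ) = Bᴴ from rfl,
    hA.eq, hB.eq]

lemma aux_pinch_isHermitian {I α : Type*} [DecidableEq α] (f : I → α) {M : Matrix I I ℂ}
    (h : M.IsHermitian) : (pinch f M).IsHermitian := by
  ext i j
  simp only [pinch, Matrix.conjTranspose_apply, Matrix.of_apply]
  by_cases hf : f i = f j
  · rw [if_pos hf, if_pos hf.symm, ← Matrix.conjTranspose_apply, h.eq]
  · rw [if_neg hf, if_neg (fun h' => hf h'.symm), star_zero]

lemma aux_pinch_trace {I α : Type*} [Fintype I] [DecidableEq I] [DecidableEq α] (f : I → α)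
    (M : Matrix I I ℂ) : (pinch f M).trace = M.trace := by
  simp [Matrix.trace, Matrix.diag, pinch]

lemma aux_pinch_posSemidef {I α : Type*} [Fintype I] [DecidableEq I] [DecidableEq α] (f : I → α)
    {M : Matrix I I ℂ} (h : M.PosSemidef) : (pinch f M).PosSemidef := by
  refine Matrix.posSemidef_iff_dotProduct_mulVec.mpr ⟨aux_pinch_isHermitian f h.1, fun x => ?_⟩
  set t : α → I → I → ℂ := fun a i j =>
    (if f i = a then star (x i) else 0) * (M i j * (if f j = a then x j else 0)) with ht
  have key : dotProduct (star x) (pinch f M *ᵥ x)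
      = ∑ a ∈ Finset.univ.image f,
          dotProduct (star fun i => if f i = a then x i else 0)
            (M *ᵥ fun i => if f i = a then x i else 0) := by
    have hL : dotProduct (star x) (pinch f M *ᵥ x)
        = ∑ i, ∑ j, star (x i) * ((if f i = f j then M i j else 0) * x j) := by
      simp [dotProduct, Matrix.mulVec, pinch, Finset.mul_sum]
    have hR : ∀ a, dotProduct (star fun i => if f i = a then x i else 0)
            (M *ᵥ fun i => if f i = a then x i else 0)
        = ∑ i, ∑ j, t a i j := by
      intro a
      simp [dotProduct, Matrix.mulVec, Finset.mul_sum, ht, apply_ite (star : ℂ → ℂ),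
        mul_assoc]
    rw [hL]
    rw [Finset.sum_congr rfl fun a _ => hR a]
    rw [show (∑ a ∈ Finset.univ.image f, ∑ i, ∑ j, t a i j)
        = ∑ i, ∑ j, ∑ a ∈ Finset.univ.image f, t a i j from
      (Finset.sum_comm).trans (Finset.sum_congr rfl fun i _ => Finset.sum_comm)]
    refine Finset.sum_congr rfl fun i _ => Finset.sum_congr rfl fun j _ => ?_
    rw [Finset.sum_eq_single_of_mem (f i) (Finset.mem_image_of_mem f (Finset.mem_univ i))]
    · by_cases hij : f i = f j
      · simp [ht, hij]
      · have h2 : ¬ f j = f i := fun h' => hij h'.symm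
        simp [ht, hij, h2]
    · intro b _ hb
      simp [ht, Ne.symm hb]
  rw [key]
  exact Finset.sum_nonneg fun a _ => h.dotProduct_mulVec_nonneg _

lemma aux_entEta_mul {x y : ℝ} (hx : 0 ≤ x) (hy : 0 ≤ y) :
    entEta (x * y) = y * entEta x + x * entEta y := by
  rcases eq_or_lt_of_le hx with h | hx'
  · simp [entEta, ← h]
  rcases eq_or_lt_of_le hy with h | hy'
  · simp [entEta, ← h]
  unfold entEta
  rw [Real.log_mul (ne_of_gt hx') (ne_of_gt hy')]
  ring

lemma aux_sum_eigen_one {n : Type*} [Fintype n] [DecidableEq n] {A : Matrix n n ℂ}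
    (hA : A.IsHermitian) (ht : A.trace = 1) : ∑ i, hA.eigenvalues i = 1 := by
  have h := aux_trace_eq_sum_eigen hA
  rw [ht] at h
  have h2 : ((∑ i, hA.eigenvalues i : ℝ) : ℂ) = ((1 : ℝ) : ℂ) := by push_cast; rw [← h]
  exact_mod_cast h2

lemma aux_vnEntropy_kronecker {m n : Type*} [Fintype m] [Fintype n] [DecidableEq m]
    [DecidableEq n] {A : Matrix m m ℂ} {B : Matrix n n ℂ}
    (hA : IsDensityMatrix A) (hB : IsDensityMatrix B) :
    vnEntropy (A ⊗ₖ B) = vnEntropy A + vnEntropy B := by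
  obtain ⟨hAh, hAp, hAt⟩ := hA
  obtain ⟨hBh, hBp, hBt⟩ := hB
  have hK : (A ⊗ₖ B).IsHermitian := aux_kron_isHermitian hAh hBh
  set U : Matrix m m ℂ := (hAh.eigenvectorUnitary : Matrix m m ℂ) with hU
  set V : Matrix n n ℂ := (hBh.eigenvectorUnitary : Matrix n n ℂ) with hV
  set d : m × n → ℝ := fun p => hAh.eigenvalues p.1 * hBh.eigenvalues p.2 with hd
  have hdecomp : A ⊗ₖ B = (U ⊗ₖ V) * Matrix.diagonal (fun p => ((d p : ℝ) : ℂ))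
      * star (U ⊗ₖ V) := by
    have hstar : star (U ⊗ₖ V) = star U ⊗ₖ star V := aux_kron_star U V
    have hdg : (Matrix.diagonal ((RCLike.ofReal ∘ hAh.eigenvalues) : m → ℂ))
        ⊗ₖ (Matrix.diagonal ((RCLike.ofReal ∘ hBh.eigenvalues) : n → ℂ))
        = Matrix.diagonal (fun p : m × n => ((d p : ℝ) : ℂ)) := by
      rw [Matrix.diagonal_kronecker_diagonal]
      exact congrArg Matrix.diagonal (funext fun p => by
        simp only [Function.comp_apply, hd]
        norm_cast)
    conv_lhs => rw [hAh.spectral_theorem, hBh.spectral_theorem]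
    rw [Unitary.conjStarAlgAut_apply, Unitary.conjStarAlgAut_apply, Matrix.mul_kronecker_mul,
      Matrix.mul_kronecker_mul, hdg, ← hstar]
  have hunit : (U ⊗ₖ V) * star (U ⊗ₖ V) = 1 := by
    rw [aux_kron_star, ← Matrix.mul_kronecker_mul, hU, hV,
      Matrix.mem_unitaryGroup_iff.mp (hAh.eigenvectorUnitary).2,
      Matrix.mem_unitaryGroup_iff.mp (hBh.eigenvectorUnitary).2,
      Matrix.one_kronecker_one]
  have hroots : (A ⊗ₖ B).charpoly.roots
      = Finset.univ.val.map (fun p => ((d p : ℝ) : ℂ)) := by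
    rw [hdecomp, aux_charpoly_conj _ _ hunit, aux_roots_of_diag_charpoly]
  have hsum := aux_sum_g_eigen_eq hK d hroots entEta
  rw [vnEntropy, vnEntropy, vnEntropy, dif_pos hK, dif_pos hAh, dif_pos hBh, hsum]
  have h1 : ∑ i, hAh.eigenvalues i = 1 := aux_sum_eigen_one hAh hAt
  have h2 : ∑ j, hBh.eigenvalues j = 1 := aux_sum_eigen_one hBh hBt
  calc ∑ p : m × n, entEta (d p)
      = ∑ i, ∑ j, (hBh.eigenvalues j * entEta (hAh.eigenvalues i)
          + hAh.eigenvalues i * entEta (hBh.eigenvalues j)) := by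
        rw [Fintype.sum_prod_type]
        exact Finset.sum_congr rfl fun i _ => Finset.sum_congr rfl fun j _ =>
          aux_entEta_mul (hAp.eigenvalues_nonneg i) (hBp.eigenvalues_nonneg j)
    _ = ∑ i, entEta (hAh.eigenvalues i) + ∑ j, entEta (hBh.eigenvalues j) := by
        simp only [Finset.sum_add_distrib, ← Finset.sum_mul, ← Finset.mul_sum]
        rw [h1, h2]
        ring

lemma aux_pinch_localE_kron {s r : ℕ} (ES : Fin s → ℤ) (ER : Fin r → ℤ)
    (A : Matrix (Fin s) (Fin s) ℂ) (B : Matrix (Fin r) (Fin r) ℂ) :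
    pinch (localE ES ER) (A ⊗ₖ B) = pinch ES A ⊗ₖ pinch ER B := by
  ext ⟨i, j⟩ ⟨k, l⟩
  simp only [pinch, localE, Matrix.of_apply, Matrix.kroneckerMap_apply, Prod.mk.injEq]
  by_cases h1 : ES i = ES k <;> by_cases h2 : ER j = ER l <;> simp [h1, h2]

lemma aux_pinch_density {I α : Type*} [Fintype I] [DecidableEq I] [DecidableEq α] (f : I → α)
    {M : Matrix I I ℂ} (h : IsDensityMatrix M) : IsDensityMatrix (pinch f M) :=
  ⟨aux_pinch_isHermitian f h.1, aux_pinch_posSemidef f h.2.1,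
    (aux_pinch_trace f M).trans h.2.2⟩

end Aux

/-- the mutual asymmetry equals the entropy gap between local and
global dephasing of the product state. -/
theorem mutual_asymmetry_eq_entropy_gap {s r : ℕ}
    (ρS : Matrix (Fin s) (Fin s) ℂ) (ρR : Matrix (Fin r) (Fin r) ℂ)
    (ES : Fin s → ℤ) (ER : Fin r → ℤ)
    (hS : IsDensityMatrix ρS) (hR : IsDensityMatrix ρR) :
    asym ES ρS + asym ER ρR - asym (globalE ES ER) (ρS ⊗ₖ ρR) =
      vnEntropy (pinch (localE ES ER) (ρS ⊗ₖ ρR)) -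
        vnEntropy (pinch (globalE ES ER) (ρS ⊗ₖ ρR)) := by
  have h1 : vnEntropy (ρS ⊗ₖ ρR) = vnEntropy ρS + vnEntropy ρR :=
    aux_vnEntropy_kronecker hS hR
  have h2 : vnEntropy (pinch (localE ES ER) (ρS ⊗ₖ ρR))
      = vnEntropy (pinch ES ρS) + vnEntropy (pinch ER ρR) := by
    rw [aux_pinch_localE_kron]
    exact aux_vnEntropy_kronecker (aux_pinch_density ES hS) (aux_pinch_density ER hR)
  simp only [asym]
  rw [h1, h2]
  ring
end

section
/- Let ρ be a positive definite density matrix on Fin s × Fin r with energy functions E_S : Fin s → ℤ, E_R : Fin r → ℤ. Then Πρ and Δρ are positive definite, and the quantum relative entropy of Πρ with respect to Δρ equals the entropy gap: tr( (Πρ) · ( log(Πρ) − log(Δρ) ) ) = S(Δρ) − S(Πρ), where the logarithm of a positive definite Hermitian matrix is defined by applying the real logarithm to its eigenvalues in a spectral decomposition. -/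
open Matrix Kronecker BigOperators ComplexOrder

/-- Logarithm of a Hermitian matrix, via applying the real logarithm to the
eigenvalues in a spectral decomposition. -/
noncomputable def matLog {n : Type*} [Fintype n] [DecidableEq n] (ρ : Matrix n n ℂ) :
    Matrix n n ℂ :=
  if h : ρ.IsHermitian then
    (h.eigenvectorUnitary : Matrix n n ℂ) *
      Matrix.diagonal (fun i => (Real.log (h.eigenvalues i) : ℂ)) *
      star (h.eigenvectorUnitary : Matrix n n ℂ)
  else 0

section helpers
set_option linter.unusedSectionVars false
variable {I : Type*} {α : Type*} [Fintype I] [DecidableEq I] [DecidableEq α]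


lemma pinch_apply (f : I → α) (M : Matrix I I ℂ) (i j : I) :
    pinch f M i j = if f i = f j then M i j else 0 := rfl

lemma pinch_isHermitian {f : I → α} {M : Matrix I I ℂ} (hM : M.IsHermitian) :
    (pinch f M).IsHermitian := by
  ext i j
  simp only [Matrix.conjTranspose_apply, pinch_apply]
  by_cases h : f i = f j
  · rw [if_pos h, if_pos h.symm, ← Matrix.conjTranspose_apply, hM]
  · rw [if_neg h, if_neg (fun hh => h hh.symm), star_zero]

lemma pinch_posDef {f : I → α} {M : Matrix I I ℂ} (hM : M.PosDef) :
    (pinch f M).PosDef := by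
  refine Matrix.PosDef.of_dotProduct_mulVec_pos (pinch_isHermitian hM.1) fun x hx => ?_
  classical
  set v : α → I → ℂ := fun a i => if f i = a then x i else 0 with hv
  have key : star x ⬝ᵥ (pinch f M *ᵥ x)
      = ∑ a ∈ Finset.univ.image f, star (v a) ⬝ᵥ (M *ᵥ v a) := by
    have lhs_eq : star x ⬝ᵥ (pinch f M *ᵥ x)
        = ∑ i, ∑ j, (if f i = f j then star (x i) * M i j * x j else 0) := by
      simp only [dotProduct, Matrix.mulVec, Pi.star_apply, Finset.mul_sum]
      refine Finset.sum_congr rfl fun i _ => Finset.sum_congr rfl fun j _ => ?_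
      simp only [pinch_apply]
      split_ifs with h
      · ring
      · simp
    have rhs_eq : ∀ a, star (v a) ⬝ᵥ (M *ᵥ v a)
        = ∑ i, ∑ j, (if f i = a ∧ f j = a then star (x i) * M i j * x j else 0) := by
      intro a
      simp only [dotProduct, Matrix.mulVec, Pi.star_apply, Finset.mul_sum, hv]
      refine Finset.sum_congr rfl fun i _ => Finset.sum_congr rfl fun j _ => ?_
      split_ifs with h1 h2 h3 <;>
        simp_all <;> ring
    rw [lhs_eq]
    simp only [rhs_eq]
    conv_rhs => rw [Finset.sum_comm]
    refine Finset.sum_congr rfl fun i _ => ?_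
    conv_rhs => rw [Finset.sum_comm]
    refine Finset.sum_congr rfl fun j _ => ?_
    by_cases h : f i = f j
    · rw [if_pos h, Finset.sum_eq_single (f i)]
      · simp [h.symm]
      · intro a _ ha
        rw [if_neg]
        rintro ⟨h1, -⟩
        exact ha h1.symm
      · intro hne
        exact absurd (Finset.mem_image_of_mem f (Finset.mem_univ i)) hne
    · rw [if_neg h]
      symm
      refine Finset.sum_eq_zero fun a _ => ?_
      rw [if_neg]
      rintro ⟨h1, h2⟩
      exact h (h1.trans h2.symm)
  rw [key]
  obtain ⟨i0, hi0⟩ := Function.ne_iff.mp hx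
  refine Finset.sum_pos' (fun a _ => hM.posSemidef.dotProduct_mulVec_nonneg (v a))
    ⟨f i0, Finset.mem_image_of_mem f (Finset.mem_univ _), ?_⟩
  apply hM.dotProduct_mulVec_pos
  intro h
  apply hi0
  have := congrFun h i0
  simpa [hv] using this

lemma pinch_pinch {β : Type*} [DecidableEq β] (f : I → α) (g : I → β)
    (h : ∀ i j, f i = f j → g i = g j) (M : Matrix I I ℂ) :
    pinch f (pinch g M) = pinch f M := by
  ext i j
  simp only [pinch_apply]
  by_cases hf : f i = f j
  · simp [hf, h i j hf]
  · simp [hf]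

lemma pinch_one (f : I → α) : pinch f (1 : Matrix I I ℂ) = 1 := by
  ext i j
  simp only [pinch_apply, Matrix.one_apply]
  by_cases h : i = j
  · simp [h]
  · simp [h]

lemma pinch_mul {f : I → α} {A B : Matrix I I ℂ}
    (hA : pinch f A = A) (hB : pinch f B = B) : pinch f (A * B) = A * B := by
  ext i j
  simp only [pinch_apply]
  split_ifs with h
  · rfl
  · symm
    rw [Matrix.mul_apply]
    refine Finset.sum_eq_zero fun k _ => ?_
    by_cases hk : f i = f k
    · have hkj : ¬ f k = f j := fun hkj => h (hk.trans hkj)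
      have : B k j = 0 := by
        conv_lhs => rw [← hB]
        simp [pinch_apply, hkj]
      rw [this, mul_zero]
    · have : A i k = 0 := by
        conv_lhs => rw [← hA]
        simp [pinch_apply, hk]
      rw [this, zero_mul]

lemma pinch_pow {f : I → α} {A : Matrix I I ℂ} (hA : pinch f A = A) :
    ∀ n : ℕ, pinch f (A ^ n) = A ^ n
  | 0 => by simpa using pinch_one f
  | (n + 1) => by rw [pow_succ]; exact pinch_mul (pinch_pow hA n) hA

noncomputable def pinchLM (f : I → α) : Matrix I I ℂ →ₗ[ℝ] Matrix I I ℂ where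
  toFun := pinch f
  map_add' A B := by
    ext i j
    simp only [pinch_apply, Matrix.add_apply]
    split_ifs <;> simp
  map_smul' c A := by
    ext i j
    simp only [pinch_apply, Matrix.smul_apply, RingHom.id_apply]
    split_ifs <;> simp

lemma pinch_aeval (f : I → α) {M : Matrix I I ℂ} (hM : pinch f M = M) (q : Polynomial ℝ) :
    pinch f (Polynomial.aeval M q) = Polynomial.aeval M q := by
  rw [Polynomial.aeval_eq_sum_range (R := ℝ)]
  rw [show pinch f = ⇑(pinchLM f) from rfl, map_sum]
  refine Finset.sum_congr rfl fun k _ => ?_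
  rw [_root_.map_smul]
  show (q.coeff k) • pinch f (M ^ k) = _
  rw [pinch_pow hM k]




lemma matLog_eq_aeval {M : Matrix I I ℂ} (hM : M.IsHermitian) :
    matLog M = Polynomial.aeval M
      (Lagrange.interpolate (Finset.univ.image hM.eigenvalues) id Real.log) := by
  set q := Lagrange.interpolate (Finset.univ.image hM.eigenvalues) id Real.log with hq
  have h1 : matLog M = hM.cfc Real.log := by
    rw [matLog, dif_pos hM]
    rfl
  have h2 : hM.cfc Real.log = hM.cfc (fun x => q.eval x) := by
    unfold Matrix.IsHermitian.cfc
    have : Real.log ∘ hM.eigenvalues = (fun x => q.eval x) ∘ hM.eigenvalues := by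
      funext i
      exact (Lagrange.eval_interpolate_at_node Real.log (Set.injOn_id _)
        (Finset.mem_image_of_mem _ (Finset.mem_univ i))).symm
    rw [this]
  rw [h1, h2, ← hM.cfc_eq, cfc_polynomial q M hM.isSelfAdjoint]

lemma pinch_matLog (f : I → α) {M : Matrix I I ℂ} (hM : M.IsHermitian)
    (hp : pinch f M = M) : pinch f (matLog M) = matLog M := by
  rw [matLog_eq_aeval hM]
  exact pinch_aeval f hp _

lemma trace_mul_matLog_self {M : Matrix I I ℂ} (hM : M.IsHermitian) :
    (M * matLog M).trace = ((- vnEntropy M : ℝ) : ℂ) := by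
  rw [matLog, dif_pos hM]
  set U : Matrix I I ℂ := (hM.eigenvectorUnitary : Matrix I I ℂ) with hU
  set D : Matrix I I ℂ := Matrix.diagonal (RCLike.ofReal ∘ hM.eigenvalues) with hD
  set L : Matrix I I ℂ := Matrix.diagonal (fun i => (Real.log (hM.eigenvalues i) : ℂ)) with hL
  have hUU : star U * U = 1 := Matrix.mem_unitaryGroup_iff'.mp hM.eigenvectorUnitary.2
  have hspec : M = U * D * star U := hM.spectral_theorem
  calc (M * (U * L * star U)).trace
      = (U * D * star U * (U * L * star U)).trace := by rw [← hspec]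
    _ = (U * (D * L) * star U).trace := by
        rw [Matrix.mul_assoc (U * D) (star U) (U * L * star U), ← Matrix.mul_assoc (star U) (U * L) (star U),
          ← Matrix.mul_assoc (star U) U L, hUU, one_mul]
        noncomm_ring
    _ = (D * L).trace := by
        rw [Matrix.trace_mul_cycle, ← Matrix.mul_assoc, hUU, one_mul]
    _ = ∑ i, (hM.eigenvalues i : ℂ) * (Real.log (hM.eigenvalues i) : ℂ) := by
        rw [hD, hL, Matrix.diagonal_mul_diagonal, Matrix.trace_diagonal]
        rfl
    _ = ((- vnEntropy M : ℝ) : ℂ) := by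
        rw [vnEntropy, dif_pos hM]
        push_cast [entEta]
        rw [← Finset.sum_neg_distrib]
        refine Finset.sum_congr rfl fun i _ => by ring

lemma trace_mul_pinch (f : I → α) {X : Matrix I I ℂ} (hX : pinch f X = X)
    (A : Matrix I I ℂ) : (A * X).trace = (pinch f A * X).trace := by
  simp only [Matrix.trace, Matrix.diag, Matrix.mul_apply]
  refine Finset.sum_congr rfl fun i _ => Finset.sum_congr rfl fun j _ => ?_
  by_cases h : f i = f j
  · simp [pinch, h]
  · have hX0 : X j i = 0 := by
      conv_lhs => rw [← hX]
      show (if f j = f i then X j i else 0) = 0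
      rw [if_neg (fun hh => h hh.symm)]
    simp [pinch, h, hX0]


end helpers

/-- for a positive definite density matrix ρ, Πρ and Δρ are positive
definite and the quantum relative entropy S(Πρ‖Δρ) equals the entropy gap
S(Δρ) − S(Πρ). -/
theorem relEntropy_eq_entropy_gap {s r : ℕ}
    (ρ : Matrix (Fin s × Fin r) (Fin s × Fin r) ℂ)
    (ES : Fin s → ℤ) (ER : Fin r → ℤ)
    (hρ : IsDensityMatrix ρ) (hpd : ρ.PosDef) :
    (pinch (globalE ES ER) ρ).PosDef ∧ (pinch (localE ES ER) ρ).PosDef ∧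
      (pinch (globalE ES ER) ρ *
          (matLog (pinch (globalE ES ER) ρ) - matLog (pinch (localE ES ER) ρ))).trace =
        ((vnEntropy (pinch (localE ES ER) ρ) - vnEntropy (pinch (globalE ES ER) ρ) : ℝ) : ℂ) := by
  have hApd : (pinch (globalE ES ER) ρ).PosDef := pinch_posDef hpd
  have hBpd : (pinch (localE ES ER) ρ).PosDef := pinch_posDef hpd
  refine ⟨hApd, hBpd, ?_⟩
  have hle : ∀ p q : Fin s × Fin r, localE ES ER p = localE ES ER q →
      globalE ES ER p = globalE ES ER q := by
    intro p q h
    have h1 : ES p.1 = ES q.1 := congrArg Prod.fst h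
    have h2 : ER p.2 = ER q.2 := congrArg Prod.snd h
    simp [globalE, h1, h2]
  have hBA : pinch (localE ES ER) (pinch (globalE ES ER) ρ) = pinch (localE ES ER) ρ :=
    pinch_pinch _ _ hle ρ
  have hBB : pinch (localE ES ER) (pinch (localE ES ER) ρ) = pinch (localE ES ER) ρ :=
    pinch_pinch _ _ (fun _ _ h => h) ρ
  have hlogB : pinch (localE ES ER) (matLog (pinch (localE ES ER) ρ))
      = matLog (pinch (localE ES ER) ρ) := pinch_matLog _ hBpd.1 hBB
  rw [mul_sub, Matrix.trace_sub, trace_mul_matLog_self hApd.1,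
    trace_mul_pinch _ hlogB (pinch (globalE ES ER) ρ), hBA,
    trace_mul_matLog_self hBpd.1]
  push_cast
  ring
end

section
/- (Joint entropy theorem.) Let p : Fin c → ℝ be a probability vector (p_i ≥ 0, ∑ p_i = 1) and for each i let σ_i be a density matrix on Fin n. Let Ω be the block-diagonal matrix on (Fin c) × (Fin n) whose entry at ((i,a),(j,b)) is p_i·(σ_i)_{ab} if i = j and 0 otherwise. Then Ω is a density matrix and S(Ω) = H(p) + ∑_i p_i · S(σ_i), where H(p) = ∑_i η(p_i) is the Shannon entropy of p. -/
open Matrix Kronecker BigOperators ComplexOrder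

open Polynomial in
lemma charpoly_unitary_conj {m : Type*} [Fintype m] [DecidableEq m]
    (U : Matrix.unitaryGroup m ℂ) (M : Matrix m m ℂ) :
    ((U : Matrix m m ℂ) * M * star (U : Matrix m m ℂ)).charpoly = M.charpoly := by
  set V : Matrix m m ℂ[X] := (C : ℂ →+* ℂ[X]).mapMatrix (U : Matrix m m ℂ) with hV
  set W : Matrix m m ℂ[X] := (C : ℂ →+* ℂ[X]).mapMatrix (star (U : Matrix m m ℂ)) with hW
  have hVW : V * W = 1 := by
    rw [hV, hW, ← _root_.map_mul, (Matrix.mem_unitaryGroup_iff).mp U.2, _root_.map_one]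
  have hWV : W * V = 1 := by
    rw [hV, hW, ← _root_.map_mul, (Matrix.mem_unitaryGroup_iff').mp U.2, _root_.map_one]
  have hcm : charmatrix ((U : Matrix m m ℂ) * M * star (U : Matrix m m ℂ))
      = V * charmatrix M * W := by
    unfold charmatrix
    rw [mul_sub, sub_mul]
    congr 1
    · have hc : Commute (Matrix.scalar m (X : ℂ[X])) V :=
        Matrix.scalar_commute _ (fun r => Commute.all _ _) _
      rw [← hc.eq, mul_assoc, hVW, mul_one]
    · rw [hV, hW, ← _root_.map_mul, ← _root_.map_mul]
  unfold Matrix.charpoly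
  rw [hcm, det_mul, det_mul, mul_comm, ← mul_assoc, ← det_mul, hWV, det_one, one_mul]

open Polynomial in
lemma charpoly_diag {m : Type*} [Fintype m] [DecidableEq m] (v : m → ℂ) :
    (Matrix.diagonal v).charpoly = ∏ i, (X - C (v i)) := by
  have : charmatrix (Matrix.diagonal v) = Matrix.diagonal (fun i => X - C (v i)) := by
    ext i j
    by_cases h : i = j
    · subst h; simp [charmatrix_apply]
    · simp [charmatrix_apply, Matrix.diagonal_apply_ne _ h]
  rw [Matrix.charpoly, this, det_diagonal]

open Polynomial in
lemma sum_f_eigenvalues {m : Type*} [Fintype m] [DecidableEq m] {A : Matrix m m ℂ}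
    (hA : A.IsHermitian) (U : Matrix.unitaryGroup m ℂ) (d : m → ℝ)
    (hAd : A = (U : Matrix m m ℂ) * Matrix.diagonal (fun i => (d i : ℂ))
      * star (U : Matrix m m ℂ)) (f : ℝ → ℝ) :
    ∑ i, f (hA.eigenvalues i) = ∑ i, f (d i) := by
  have h1 : A.charpoly = ∏ i, (X - C ((d i : ℂ))) := by
    rw [hAd, charpoly_unitary_conj, charpoly_diag]
  have h2 : A.charpoly = ∏ i, (X - C ((hA.eigenvalues i : ℂ))) := by
    conv_lhs => rw [hA.spectral_theorem]
    rw [Unitary.conjStarAlgAut_apply, charpoly_unitary_conj, charpoly_diag]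
    rfl
  have key : (Finset.univ.val.map fun i => ((hA.eigenvalues i : ℂ)))
      = Finset.univ.val.map fun i => ((d i : ℂ)) := by
    have hr : ∀ (g : m → ℂ), (∏ i, (X - C (g i))).roots = Finset.univ.val.map g := by
      intro g
      have : (∏ i, (X - C (g i))) = ((Finset.univ.val.map g).map (fun x : ℂ => X - C x)).prod := by
        rw [Multiset.map_map]; rfl
      rw [this, Polynomial.roots_multiset_prod_X_sub_C]
    calc (Finset.univ.val.map fun i => ((hA.eigenvalues i : ℂ)))
        = (∏ i, (X - C ((hA.eigenvalues i : ℂ)))).roots := (hr _).symm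
      _ = (∏ i, (X - C ((d i : ℂ)))).roots := by rw [← h2, ← h1]
      _ = Finset.univ.val.map fun i => ((d i : ℂ)) := hr _
  have keyR : (Finset.univ.val.map fun i => hA.eigenvalues i)
      = Finset.univ.val.map fun i => d i := by
    have := congrArg (Multiset.map Complex.re) key
    simpa [Multiset.map_map, Function.comp] using this
  calc ∑ i, f (hA.eigenvalues i)
      = ((Finset.univ.val.map fun i => hA.eigenvalues i).map f).sum := by
        rw [Multiset.map_map]; rfl
    _ = ((Finset.univ.val.map fun i => d i).map f).sum := by rw [keyR]
    _ = ∑ i, f (d i) := by rw [Multiset.map_map]; rfl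

lemma entEta_mul (x y : ℝ) : entEta (x * y) = x * entEta y + y * entEta x := by
  unfold entEta
  rcases eq_or_ne x 0 with hx | hx
  · simp [hx]
  rcases eq_or_ne y 0 with hy | hy
  · simp [hy]
  rw [Real.log_mul hx hy]; ring


/-- Joint entropy theorem: the entropy of a block-diagonal cq-state is
the Shannon entropy of the probability vector plus the average entropy of the blocks. -/
theorem joint_entropy_theorem {c n : ℕ}
    (p : Fin c → ℝ) (hp0 : ∀ i, 0 ≤ p i) (hp1 : ∑ i, p i = 1)
    (σ : Fin c → Matrix (Fin n) (Fin n) ℂ) (hσ : ∀ i, IsDensityMatrix (σ i))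
    (Ω : Matrix (Fin c × Fin n) (Fin c × Fin n) ℂ)
    (hΩ : ∀ x y : Fin c × Fin n,
      Ω x y = if x.1 = y.1 then (p x.1 : ℂ) * σ x.1 x.2 y.2 else 0) :
    IsDensityMatrix Ω ∧
      vnEntropy Ω = (∑ i, entEta (p i)) + ∑ i, p i * vnEntropy (σ i) := by
  have hherm : ∀ i, (σ i).IsHermitian := fun i => (hσ i).1
  let lam : Fin c → Fin n → ℝ := fun i => (hherm i).eigenvalues
  let V : Fin c → Matrix (Fin n) (Fin n) ℂ :=
    fun i => ((hherm i).eigenvectorUnitary : Matrix (Fin n) (Fin n) ℂ)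
  have hspec : ∀ i, σ i = V i * Matrix.diagonal (fun a => ((lam i a : ℝ) : ℂ)) * star (V i) :=
    fun i => (hherm i).spectral_theorem
  have hVmul : ∀ i, V i * star (V i) = 1 :=
    fun i => (Matrix.mem_unitaryGroup_iff).mp ((hherm i).eigenvectorUnitary).2
  have hVmul' : ∀ i, star (V i) * V i = 1 :=
    fun i => (Matrix.mem_unitaryGroup_iff').mp ((hherm i).eigenvectorUnitary).2
  let U : Matrix (Fin c × Fin n) (Fin c × Fin n) ℂ :=
    Matrix.of fun x y => if x.1 = y.1 then V x.1 x.2 y.2 else 0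
  let d : Fin c × Fin n → ℝ := fun x => p x.1 * lam x.1 x.2
  have hUmem : U ∈ Matrix.unitaryGroup (Fin c × Fin n) ℂ := by
    rw [Matrix.mem_unitaryGroup_iff]
    ext ⟨i, a⟩ ⟨j, b⟩
    have lhs_eq : (U * star U) ((i, a)) ((j, b))
        = ∑ k, ∑ m, (if i = k then V i a m else 0) * star (if j = k then V j b m else 0) := by
      rw [Matrix.mul_apply, Fintype.sum_prod_type]
      rfl
    rw [lhs_eq]
    by_cases hij : i = j
    · subst hij
      rw [Finset.sum_eq_single i ?hz (by simp)]
      case hz =>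
        intro k _ hk
        apply Finset.sum_eq_zero; intro m _
        rw [if_neg (fun h => hk h.symm), zero_mul]
      simp only [if_pos rfl]
      calc ∑ m, V i a m * star (V i b m) = (V i * star (V i)) a b := by
            rw [Matrix.mul_apply]; rfl
        _ = (1 : Matrix (Fin n) (Fin n) ℂ) a b := by rw [hVmul i]
        _ = (1 : Matrix (Fin c × Fin n) (Fin c × Fin n) ℂ) ((i, a)) ((i, b)) := by
            by_cases hab : a = b
            · subst hab; simp
            · rw [Matrix.one_apply_ne hab, Matrix.one_apply_ne (by simp [hab])]
    · rw [Matrix.one_apply_ne (by simp [hij])]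
      apply Finset.sum_eq_zero; intro k _
      apply Finset.sum_eq_zero; intro m _
      by_cases hjk : j = k
      · rw [if_neg (fun h : i = k => hij (h.trans hjk.symm)), zero_mul]
      · rw [if_neg hjk, star_zero, mul_zero]
  have hdec : Ω = U * Matrix.diagonal (fun x => (d x : ℂ)) * star U := by
    ext ⟨i, a⟩ ⟨j, b⟩
    have rhs_eq : (U * Matrix.diagonal (fun x => (d x : ℂ)) * star U) ((i, a)) ((j, b))
        = ∑ k, ∑ m, (if i = k then V i a m else 0) * ((d ((k, m)) : ℝ) : ℂ)
            * star (if j = k then V j b m else 0) := by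
      rw [Matrix.mul_apply, Fintype.sum_prod_type]
      refine Finset.sum_congr rfl fun k _ => Finset.sum_congr rfl fun m _ => ?_
      rw [Matrix.mul_diagonal]
      rfl
    rw [hΩ, rhs_eq]
    by_cases hij : i = j
    · subst hij
      rw [if_pos rfl]
      rw [Finset.sum_eq_single i ?hz (by simp)]
      case hz =>
        intro k _ hk
        apply Finset.sum_eq_zero; intro m _
        rw [if_neg (fun h => hk h.symm), zero_mul, zero_mul]
      simp only [if_pos rfl]
      conv_lhs => rw [hspec i]
      rw [Matrix.mul_apply, Finset.mul_sum]
      refine Finset.sum_congr rfl fun m _ => ?_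
      rw [Matrix.mul_diagonal]
      simp only [d, Matrix.star_apply]
      push_cast
      ring
    · rw [if_neg hij]
      symm
      apply Finset.sum_eq_zero; intro k _
      apply Finset.sum_eq_zero; intro m _
      by_cases hjk : j = k
      · rw [if_neg (fun h : i = k => hij (h.trans hjk.symm)), zero_mul, zero_mul]
      · rw [if_neg hjk, star_zero, mul_zero]
  have hd0 : ∀ x, 0 ≤ d x := fun x =>
    mul_nonneg (hp0 x.1) ((hσ x.1).2.1.eigenvalues_nonneg x.2)
  have hPSDdiag : (Matrix.diagonal (fun x => ((d x : ℝ) : ℂ))).PosSemidef := by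
    rw [Matrix.posSemidef_diagonal_iff]
    intro x
    simpa [Complex.zero_le_real] using hd0 x
  have hPSD : Ω.PosSemidef := by
    rw [hdec]
    exact hPSDdiag.mul_mul_conjTranspose_same U
  have hΩherm : Ω.IsHermitian := hPSD.isHermitian
  have hsumlam : ∀ i, ∑ a, lam i a = 1 := by
    intro i
    have htr : (σ i).trace = ((∑ a, lam i a : ℝ) : ℂ) := by
      conv_lhs => rw [hspec i]
      rw [Matrix.trace_mul_cycle, hVmul' i, one_mul, Matrix.trace_diagonal]
      push_cast
      rfl
    have h1 := (hσ i).2.2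
    rw [htr] at h1
    exact_mod_cast h1
  have htrΩ : Ω.trace = 1 := by
    have : Ω.trace = ∑ i, ∑ a, Ω (i, a) (i, a) := by
      rw [Matrix.trace]
      exact Fintype.sum_prod_type ..
    rw [this]
    have h2 : ∀ i, ∑ a, Ω (i, a) (i, a) = (p i : ℂ) := by
      intro i
      have : ∀ a, Ω (i, a) (i, a) = (p i : ℂ) * σ i a a := by
        intro a; rw [hΩ]; simp
      rw [Finset.sum_congr rfl fun a _ => this a, ← Finset.mul_sum]
      have : ∑ a, σ i a a = 1 := (hσ i).2.2
      rw [this, mul_one]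
    rw [Finset.sum_congr rfl fun i _ => h2 i]
    norm_cast
  refine ⟨⟨hΩherm, hPSD, htrΩ⟩, ?_⟩
  have hent : vnEntropy Ω = ∑ x : Fin c × Fin n, entEta (d x) := by
    rw [vnEntropy, dif_pos hΩherm]
    exact sum_f_eigenvalues hΩherm ⟨U, hUmem⟩ d hdec entEta
  have hentσ : ∀ i, vnEntropy (σ i) = ∑ a, entEta (lam i a) := by
    intro i; rw [vnEntropy, dif_pos (hherm i)]
  rw [hent, Fintype.sum_prod_type]
  have hblock : ∀ i, ∑ a, entEta (d (i, a)) = entEta (p i) + p i * vnEntropy (σ i) := by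
    intro i
    rw [hentσ i]
    calc ∑ a, entEta (p i * lam i a)
        = ∑ a, (p i * entEta (lam i a) + lam i a * entEta (p i)) :=
          Finset.sum_congr rfl fun a _ => entEta_mul _ _
      _ = p i * ∑ a, entEta (lam i a) + (∑ a, lam i a) * entEta (p i) := by
          rw [Finset.sum_add_distrib, Finset.mul_sum, Finset.sum_mul]
      _ = entEta (p i) + p i * ∑ a, entEta (lam i a) := by rw [hsumlam i]; ring
  rw [Finset.sum_congr rfl fun i _ => hblock i, Finset.sum_add_distrib]
end

section
/- (Two-qubit Page–Wootters example.) Let s = r = 2 with energy functions E_S(0) = E_R(0) = 1 and E_S(1) = E_R(1) = −1, and let ρ_S = ρ_R be the 2×2 matrix all of whose entries equal 1/2 (the state |+⟩⟨+|). Then A(ρ_S) = A(ρ_R) = log 2, A(ρ_S ⊗ ρ_R) = (3/2)·log 2, and the mutual asymmetry is A(ρ_S) + A(ρ_R) − A(ρ_S ⊗ ρ_R) = (1/2)·log 2 > 0. -/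
open Matrix Kronecker BigOperators ComplexOrder

/-- The qubit state |+⟩⟨+|, all of whose entries equal 1/2. -/
noncomputable def plusState : Matrix (Fin 2) (Fin 2) ℂ := Matrix.of fun _ _ => 1 / 2

/-- Qubit energies: E(0) = 1, E(1) = −1. -/
def qubitE : Fin 2 → ℤ := ![1, -1]


section Helpers

variable {n : Type*} [Fintype n] [DecidableEq n]
lemma my_trace_eq {A : Matrix n n ℂ} (hA : A.IsHermitian) :
    A.trace = ∑ i, (hA.eigenvalues i : ℂ) := by
  set U : Matrix n n ℂ := (hA.eigenvectorUnitary : Matrix n n ℂ) with hU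
  set D : Matrix n n ℂ := diagonal (RCLike.ofReal ∘ hA.eigenvalues) with hD
  have hsu : star U * U = 1 := Unitary.coe_star_mul_self hA.eigenvectorUnitary
  calc A.trace = (U * D * star U).trace := by rw [hA.spectral_theorem, Unitary.conjStarAlgAut_apply, ← hU, ← hD]
    _ = (star U * (U * D)).trace := by rw [trace_mul_comm]
    _ = D.trace := by rw [← mul_assoc, hsu, one_mul]
    _ = ∑ i, (hA.eigenvalues i : ℂ) := by simp [hD, trace_diagonal]

lemma my_trace_sq_eq {A : Matrix n n ℂ} (hA : A.IsHermitian) :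
    (A * A).trace = ∑ i, ((hA.eigenvalues i : ℂ))^2 := by
  set U : Matrix n n ℂ := (hA.eigenvectorUnitary : Matrix n n ℂ) with hU
  set D : Matrix n n ℂ := diagonal (RCLike.ofReal ∘ hA.eigenvalues) with hD
  have hsu : star U * U = 1 := Unitary.coe_star_mul_self hA.eigenvectorUnitary
  have key : A * A = U * (D * D) * star U := by
    conv_lhs => rw [hA.spectral_theorem, Unitary.conjStarAlgAut_apply, ← hU, ← hD]
    rw [show U * D * star U * (U * D * star U) = U * D * (star U * U) * D * star U by
      noncomm_ring]
    rw [hsu, mul_one]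
    noncomm_ring
  calc (A * A).trace = (U * (D * D) * star U).trace := by rw [key]
    _ = (star U * (U * (D * D))).trace := by rw [trace_mul_comm]
    _ = (D * D).trace := by rw [← mul_assoc, hsu, one_mul]
    _ = ∑ i, ((hA.eigenvalues i : ℂ))^2 := by
        simp [hD, diagonal_mul_diagonal, trace_diagonal, sq]


lemma eig_ne {A : Matrix n n ℂ} (hA : A.IsHermitian) (i : n) :
    (⇑(hA.eigenvectorBasis i) : n → ℂ) ≠ 0 := by
  have h := hA.eigenvectorBasis.orthonormal.ne_zero i
  intro hc; exact h (by ext j; exact congrFun hc j)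

lemma eig_real_smul {A : Matrix n n ℂ} (hA : A.IsHermitian) (i : n) :
    A *ᵥ (⇑(hA.eigenvectorBasis i) : n → ℂ)
      = (hA.eigenvalues i : ℂ) • (⇑(hA.eigenvectorBasis i) : n → ℂ) := by
  rw [hA.mulVec_eigenvectorBasis]
  ext j; simp [Complex.real_smul]

lemma eig_idem {A : Matrix n n ℂ} (hA : A.IsHermitian) (h : A * A = A) (i : n) :
    hA.eigenvalues i = 0 ∨ hA.eigenvalues i = 1 := by
  set μ := hA.eigenvalues i with hμ
  set v : n → ℂ := ⇑(hA.eigenvectorBasis i) with hv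
  have hev := eig_real_smul hA i
  have h2 : A *ᵥ (A *ᵥ v) = ((μ : ℂ) * μ) • v := by
    rw [hev, mulVec_smul, hev, smul_smul]
  have h3 : A *ᵥ (A *ᵥ v) = (μ : ℂ) • v := by
    rw [mulVec_mulVec, h, hev]
  have h4 : ((μ : ℂ) * μ - μ) • v = 0 := by
    rw [sub_smul, ← h2, h3, sub_self]
  rcases smul_eq_zero.mp h4 with hz | hz
  · have hr : μ * μ - μ = 0 := by exact_mod_cast hz
    have : μ * (μ - 1) = 0 := by ring_nf; linarith
    rcases mul_eq_zero.mp this with h5 | h5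
    · exact Or.inl h5
    · exact Or.inr (by linarith)
  · exact absurd hz (eig_ne hA i)

lemma eig_smul_one {A : Matrix n n ℂ} (hA : A.IsHermitian) {c : ℝ}
    (h : A = (c : ℂ) • 1) (i : n) : hA.eigenvalues i = c := by
  set μ := hA.eigenvalues i with hμ
  set v : n → ℂ := ⇑(hA.eigenvectorBasis i) with hv
  have hev := eig_real_smul hA i
  have h2 : A *ᵥ v = (c : ℂ) • v := by rw [h, smul_mulVec, one_mulVec]
  have h4 : ((μ : ℂ) - c) • v = 0 := by rw [sub_smul, ← hev, h2, sub_self]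
  rcases smul_eq_zero.mp h4 with hz | hz
  · have : μ - c = 0 := by exact_mod_cast hz
    linarith
  · exact absurd hz (eig_ne hA i)

lemma eig_cubic {A : Matrix n n ℂ} (hA : A.IsHermitian)
    (h : A * A * A = (3/4 : ℂ) • (A * A) - (1/8 : ℂ) • A) (i : n) :
    hA.eigenvalues i = 0 ∨ hA.eigenvalues i = 1/4 ∨ hA.eigenvalues i = 1/2 := by
  set μ := hA.eigenvalues i with hμ
  set v : n → ℂ := ⇑(hA.eigenvectorBasis i) with hv
  have hev := eig_real_smul hA i
  have h2 : (A * A) *ᵥ v = ((μ : ℂ) * μ) • v := by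
    rw [← mulVec_mulVec, hev, mulVec_smul, hev, smul_smul]
  have h3 : (A * A * A) *ᵥ v = ((μ : ℂ) * μ * μ) • v := by
    rw [← mulVec_mulVec, hev, mulVec_smul, h2, smul_smul, ← hμ]; ring_nf
  have h4 : (A * A * A) *ᵥ v = ((3/4 : ℂ) * (μ * μ) - (1/8 : ℂ) * μ) • v := by
    rw [h, sub_mulVec, smul_mulVec, smul_mulVec, h2, hev,
      smul_smul, smul_smul, sub_smul]
  have h5 : ((μ : ℂ) * μ * μ - ((3/4 : ℂ) * (μ * μ) - (1/8 : ℂ) * μ)) • v = 0 := by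
    rw [sub_smul, ← h3, h4, sub_self]
  rcases smul_eq_zero.mp h5 with hz | hz
  · have hr : μ * μ * μ - (3/4 * (μ * μ) - 1/8 * μ) = 0 := by
      have h' : ((μ * μ * μ - (3/4 * (μ * μ) - 1/8 * μ) : ℝ) : ℂ) = 0 := by
        push_cast; linear_combination hz
      exact_mod_cast h'
    have : μ * (μ - 1/4) * (μ - 1/2) = 0 := by ring_nf; ring_nf at hr; linarith
    rcases mul_eq_zero.mp this with h6 | h6
    · rcases mul_eq_zero.mp h6 with h7 | h7
      · exact Or.inl h7
      · exact Or.inr (Or.inl (by linarith))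
    · exact Or.inr (Or.inr (by linarith))
  · exact absurd hz (eig_ne hA i)


lemma ent0 : entEta 0 = 0 := by simp [entEta]
lemma ent1 : entEta 1 = 0 := by simp [entEta]
lemma enth : entEta (1/2) = (1/2) * Real.log 2 := by
  rw [entEta, show (1:ℝ)/2 = 2⁻¹ by norm_num, Real.log_inv]; ring
lemma entq : entEta (1/4) = (1/2) * Real.log 2 := by
  have : Real.log 4 = 2 * Real.log 2 := by
    rw [show (4:ℝ) = 2^2 by norm_num, Real.log_pow]; push_cast; ring
  rw [entEta, show (1:ℝ)/4 = 4⁻¹ by norm_num, Real.log_inv, this]; ring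

lemma quad (a b c d : ℝ)
    (ha : a = 0 ∨ a = 1/4 ∨ a = 1/2) (hb : b = 0 ∨ b = 1/4 ∨ b = 1/2)
    (hc : c = 0 ∨ c = 1/4 ∨ c = 1/2) (hd : d = 0 ∨ d = 1/4 ∨ d = 1/2)
    (hs : a + b + c + d = 1) (hq : a^2 + b^2 + c^2 + d^2 = 3/8) :
    entEta a + entEta b + entEta c + entEta d = (3/2) * Real.log 2 := by
  rcases ha with rfl|rfl|rfl <;> rcases hb with rfl|rfl|rfl <;>
    rcases hc with rfl|rfl|rfl <;> rcases hd with rfl|rfl|rfl <;>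
    simp only [ent0, entq, enth] <;> norm_num at hs <;> norm_num at hq <;> ring


lemma pinch_herm {I : Type*} {α : Type*} [Fintype I] [DecidableEq α] (f : I → α)
    {M : Matrix I I ℂ} (hM : M.IsHermitian) : (pinch f M).IsHermitian := by
  ext i j
  simp only [conjTranspose_apply, pinch, of_apply]
  by_cases h : f i = f j
  · rw [if_pos h, if_pos h.symm, ← conjTranspose_apply, hM.eq]
  · rw [if_neg h, if_neg (fun hc => h hc.symm), star_zero]

lemma plus_herm : plusState.IsHermitian := by
  ext i j; simp [plusState, conjTranspose_apply]

lemma plus_proj : plusState * plusState = plusState := by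
  ext i j
  simp [plusState, mul_apply, Fin.sum_univ_two]

lemma pinch_plus : pinch qubitE plusState = ((1:ℝ)/2 : ℂ) • 1 := by
  ext i j
  fin_cases i <;> fin_cases j <;>
    simp [pinch, plusState, qubitE, Matrix.one_apply]

noncomputable def K : Matrix (Fin 2 × Fin 2) (Fin 2 × Fin 2) ℂ := plusState ⊗ₖ plusState

lemma K_eq : K = Matrix.of fun _ _ => (1/4 : ℂ) := by
  ext p q
  simp [K, kroneckerMap_apply, plusState]
  norm_num

lemma K_herm : K.IsHermitian := by
  rw [K_eq]; ext p q; simp [conjTranspose_apply]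

lemma K_proj : K * K = K := by
  rw [show K * K = (plusState * plusState) ⊗ₖ (plusState * plusState) by
    rw [K, ← Matrix.mul_kronecker_mul], plus_proj]; rfl

noncomputable def Q : Matrix (Fin 2 × Fin 2) (Fin 2 × Fin 2) ℂ :=
  pinch (globalE qubitE qubitE) K

lemma Q_herm : Q.IsHermitian := pinch_herm _ K_herm

lemma Q_eq : Q = Matrix.of fun p q =>
    if qubitE p.1 + qubitE p.2 = qubitE q.1 + qubitE q.2 then (1/4:ℂ) else 0 := by
  rw [Q, K_eq]; rfl

lemma Q_cubic : Q * Q * Q = (3/4 : ℂ) • (Q * Q) - (1/8 : ℂ) • Q := by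
  rw [Q_eq]
  ext ⟨a,b⟩ ⟨c,d⟩
  fin_cases a <;> fin_cases b <;> fin_cases c <;> fin_cases d <;>
    simp [mul_apply, Fintype.sum_prod_type, Fin.sum_univ_two, qubitE] <;> norm_num

lemma Q_trace : Q.trace = 1 := by
  rw [Q_eq, trace]
  simp [Fintype.sum_prod_type, Fin.sum_univ_two, diag]

lemma Q_sq_trace : (Q * Q).trace = 3/8 := by
  rw [Q_eq, trace]
  simp [Fintype.sum_prod_type, Fin.sum_univ_two, diag, mul_apply, qubitE]
  norm_num

lemma vnEntropy_eq {n : Type*} [Fintype n] [DecidableEq n] {A : Matrix n n ℂ}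
    (hA : A.IsHermitian) : vnEntropy A = ∑ i, entEta (hA.eigenvalues i) := dif_pos hA

lemma vn_proj {n : Type*} [Fintype n] [DecidableEq n] {A : Matrix n n ℂ}
    (hA : A.IsHermitian) (h : A * A = A) : vnEntropy A = 0 := by
  rw [vnEntropy_eq hA]
  apply Finset.sum_eq_zero
  intro i _
  rcases eig_idem hA h i with h0 | h0 <;> rw [h0]
  · exact ent0
  · exact ent1

lemma S_plus : vnEntropy plusState = 0 := vn_proj plus_herm plus_proj

lemma S_pinch_plus : vnEntropy (pinch qubitE plusState) = Real.log 2 := by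
  have hH := pinch_herm qubitE plus_herm
  rw [vnEntropy_eq hH]
  have he : ∀ i, hH.eigenvalues i = (1:ℝ)/2 :=
    eig_smul_one hH (by rw [pinch_plus]; norm_num)
  rw [Fin.sum_univ_two, he 0, he 1, enth]; ring

lemma S_K : vnEntropy K = 0 := vn_proj K_herm K_proj

lemma S_Q : vnEntropy Q = (3/2) * Real.log 2 := by
  have hH := Q_herm
  rw [vnEntropy_eq hH]
  have hmem := eig_cubic hH Q_cubic
  have hs : ∑ i, hH.eigenvalues i = 1 := by
    have := my_trace_eq hH
    rw [Q_trace] at this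
    exact_mod_cast this.symm
  have hq : ∑ i, (hH.eigenvalues i)^2 = 3/8 := by
    have := my_trace_sq_eq hH
    rw [Q_sq_trace] at this
    have h2 : ((∑ i, (hH.eigenvalues i)^2 : ℝ) : ℂ) = ((3/8 : ℝ) : ℂ) := by
      push_cast
      rw [← this]
    exact_mod_cast h2
  rw [Fintype.sum_prod_type, Fin.sum_univ_two, Fin.sum_univ_two, Fin.sum_univ_two] at hs hq ⊢
  have := quad _ _ _ _ (hmem (0,0)) (hmem (0,1)) (hmem (1,0)) (hmem (1,1))
    (by linarith) (by linarith)
  linarith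

end Helpers

/-- two-qubit Page–Wootters example: the local asymmetries equal
log 2, the global asymmetry equals (3/2)·log 2, and the mutual asymmetry equals
(1/2)·log 2 > 0. -/
theorem two_qubit_page_wootters :
    asym qubitE plusState = Real.log 2 ∧
    asym (globalE qubitE qubitE) (plusState ⊗ₖ plusState) = (3 / 2) * Real.log 2 ∧
    asym qubitE plusState + asym qubitE plusState -
        asym (globalE qubitE qubitE) (plusState ⊗ₖ plusState) = (1 / 2) * Real.log 2 ∧
    (0 : ℝ) < (1 / 2) * Real.log 2 := by
  have h1 : asym qubitE plusState = Real.log 2 := by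
    rw [asym, S_plus, S_pinch_plus]; ring
  have h2 : asym (globalE qubitE qubitE) (plusState ⊗ₖ plusState) = (3/2) * Real.log 2 := by
    rw [asym, show pinch (globalE qubitE qubitE) (plusState ⊗ₖ plusState) = Q from rfl,
      show plusState ⊗ₖ plusState = K from rfl, S_Q, S_K]; ring
  refine ⟨h1, by rw [h2], by rw [h1, h2]; ring, ?_⟩
  have := Real.log_pos (by norm_num : (1:ℝ) < 2)
  linarith
end

section
/- (Schrödinger dynamics from the Page–Wootters constraint.) Let H_S ∈ M_{Fin s}(ℂ) and H_R ∈ M_{Fin r}(ℂ) be Hermitian matrices and let ψ : Fin s × Fin r → ℂ satisfy the constraint (H_S ⊗ 1 + 1 ⊗ H_R) ψ = 0, i.e. for all (m,n): ∑_{m'} (H_S)_{m m'} ψ(m',n) + ∑_{n'} (H_R)_{n n'} ψ(m,n') = 0. Fix φ₀ : Fin r → ℂ and for t ∈ ℝ let φ(t) = exp(−i·t·H_R) ·ᵥ φ₀ (matrix exponential applied to φ₀), and define the relative state ψ_S(t) : Fin s → ℂ by ψ_S(t)(m) = ∑_n conj(φ(t)(n)) · ψ(m,n). Then for every t ∈ ℝ,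 the function t ↦ ψ_S(t) is differentiable with derivative −i · (H_S ·ᵥ ψ_S(t)); equivalently, ψ_S satisfies the Schrödinger equation i·(d/dt)ψ_S(t) = H_S ·ᵥ ψ_S(t). -/
open Matrix BigOperators

lemma aux_deriv {r : ℕ} (HR : Matrix (Fin r) (Fin r) ℂ) (φ₀ : Fin r → ℂ) (t : ℝ) :
    HasDerivAt (fun t : ℝ => (NormedSpace.exp ((-(Complex.I * (t : ℂ))) • HR)).mulVec φ₀)
      ((-Complex.I) • ((HR * NormedSpace.exp ((-(Complex.I * (t : ℂ))) • HR)).mulVec φ₀)) t := by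
  letI : NormedRing (Matrix (Fin r) (Fin r) ℂ) := Matrix.linftyOpNormedRing
  letI : NormedAlgebra ℂ (Matrix (Fin r) (Fin r) ℂ) := Matrix.linftyOpNormedAlgebra
  have h1 : HasDerivAt (fun u : ℂ => NormedSpace.exp (u • HR))
      (HR * NormedSpace.exp ((-(Complex.I * (t:ℂ))) • HR)) (-(Complex.I * (t:ℂ))) :=
    hasDerivAt_exp_smul_const' HR _
  have h2 : HasDerivAt (fun t : ℝ => -(Complex.I * (t : ℂ))) (-Complex.I) t := by
    have := ((Complex.ofRealCLM.hasDerivAt (x := t)).const_mul Complex.I).neg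
    simp at this
    exact this
  have h3 : HasDerivAt (fun t : ℝ => NormedSpace.exp ((-(Complex.I * (t : ℂ))) • HR))
      ((-Complex.I) • (HR * NormedSpace.exp ((-(Complex.I * (t:ℂ))) • HR))) t :=
    HasDerivAt.scomp (g₁ := fun u : ℂ => NormedSpace.exp (u • HR)) t h1 h2
  let L : Matrix (Fin r) (Fin r) ℂ →ₗ[ℂ] (Fin r → ℂ) :=
    { toFun := fun M => M.mulVec φ₀
      map_add' := fun M N => by ext n; simp [Matrix.add_mulVec]
      map_smul' := fun c M => by ext n; simp [Matrix.smul_mulVec] }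
  have := ((LinearMap.toContinuousLinearMap L).restrictScalars ℝ).hasFDerivAt.comp_hasDerivAt t h3
  convert this using 1
  · rfl
  · rfl
  · rfl
  · rfl
  change _ = ((-Complex.I) • (HR * NormedSpace.exp ((-(Complex.I * (t : ℂ))) • HR))) *ᵥ φ₀
  rw [Matrix.smul_mulVec]


/-- Schrödinger dynamics from the Page–Wootters constraint: the
relative state ψ_S(t) = ⟨φ(t)|ψ⟩ of the system with respect to the clock satisfies
the Schrödinger equation with Hamiltonian H_S. -/
theorem page_wootters_schrodinger {s r : ℕ}
    (HS : Matrix (Fin s) (Fin s) ℂ) (HR : Matrix (Fin r) (Fin r) ℂ)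
    (hHS : HS.IsHermitian) (hHR : HR.IsHermitian)
    (ψ : Fin s × Fin r → ℂ)
    (hconstraint : ∀ (m : Fin s) (n : Fin r),
      (∑ m', HS m m' * ψ (m', n)) + ∑ n', HR n n' * ψ (m, n') = 0)
    (φ₀ : Fin r → ℂ)
    (φ : ℝ → Fin r → ℂ)
    (hφ : ∀ t : ℝ, φ t = (NormedSpace.exp ((-(Complex.I * (t : ℂ))) • HR)).mulVec φ₀)
    (ψS : ℝ → Fin s → ℂ)
    (hψS : ∀ (t : ℝ) (m : Fin s), ψS t m = ∑ n, (starRingEnd ℂ) (φ t n) * ψ (m, n)) :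
    ∀ t : ℝ, HasDerivAt ψS ((-Complex.I) • HS.mulVec (ψS t)) t := by
  intro t
  have hφfun : φ = fun t : ℝ => (NormedSpace.exp ((-(Complex.I * (t : ℂ))) • HR)).mulVec φ₀ :=
    funext hφ
  have hherm : ∀ n k : Fin r, (starRingEnd ℂ) (HR n k) = HR k n := fun n k => hHR.apply k n
  -- coordinate derivative of φ
  have hφd : ∀ n, HasDerivAt (fun t => φ t n)
      ((-Complex.I) * (HR.mulVec (φ t) n)) t := by
    intro n
    have h := hasDerivAt_pi.mp (aux_deriv HR φ₀ t) n
    rw [hφfun]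
    convert h using 1
    · rfl
    rw [Matrix.mulVec_mulVec]
    simp [hφ t]
  -- per-coordinate derivative of ψS
  have key : ∀ m, HasDerivAt (fun t => ∑ n, (starRingEnd ℂ) (φ t n) * ψ (m, n))
      (((-Complex.I) • HS.mulVec (ψS t)) m) t := by
    intro m
    have h1 : ∀ n ∈ Finset.univ, HasDerivAt (fun t => (starRingEnd ℂ) (φ t n) * ψ (m, n))
        ((starRingEnd ℂ) ((-Complex.I) * (HR.mulVec (φ t) n)) * ψ (m, n)) t := by
      intro n _
      exact ((hφd n).star).mul_const _
    have hsum := HasDerivAt.sum h1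
    convert hsum using 1
    · rfl
    · exact (Finset.sum_fn _ _).symm
    -- algebra
    have hc : ∀ n, (∑ m', HS m m' * ψ (m', n)) = -∑ n', HR n n' * ψ (m, n') :=
      fun n => eq_neg_of_add_eq_zero_left (hconstraint m n)
    have e1 : ∑ m', HS m m' * ψS t m'
        = ∑ n, (starRingEnd ℂ) (φ t n) * ∑ m', HS m m' * ψ (m', n) := by
      simp only [hψS t, Finset.mul_sum]
      rw [Finset.sum_comm]
      exact Finset.sum_congr rfl fun n _ => Finset.sum_congr rfl fun m' _ => by ring
    simp only [Pi.smul_apply, smul_eq_mul, Matrix.mulVec, dotProduct] at *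
    rw [e1]
    simp only [hc, _root_.map_mul, map_neg, map_sum, Complex.conj_I, hherm,
      Finset.mul_sum, Finset.sum_mul, mul_neg, neg_mul, neg_neg, Finset.sum_neg_distrib]
    rw [Finset.sum_comm]
    exact Finset.sum_congr rfl fun n _ => Finset.sum_congr rfl fun k _ => by ring
  have hgoal := hasDerivAt_pi.mpr key
  refine hgoal.congr_of_eventuallyEq ?_
  filter_upwards with u
  exact funext fun m => hψS u m
end
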